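/- arXiv:1802.04412 — 2 statements merged into one kernel-verified Lean document; each statement's English description precedes it below -/
import Mathlib

section
/- Let λ > 0 and φ₁,…,φ_T ∈ ℝ^d with ‖φ_t‖₂² ≤ L² for all t. Define V₀ = λI and V_t = V_{t-1} + φ_t φ_tᵀ. Then ∑_{t=1}^T log(1 + φ_tᵀ V_{t-1}⁻¹ φ_t) ≤ d · log(λ + T L²/d) - d·log λ. -/
open Finset Matrix

/-- AM-GM in log form via concavity of `log`. -/
lemma sum_log_le_card_mul_log {d : ℕ} (hd : 0 < d) (μ : Fin d → ℝ) (hμ : ∀ i, 0 < μ i) :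
    ∑ i, Real.log (μ i) ≤ d * Real.log ((∑ i, μ i) / d) := by
  have hd' : (0:ℝ) < d := by exact_mod_cast hd
  have hconc : ConcaveOn ℝ (Set.Ioi 0) Real.log := strictConcaveOn_log_Ioi.concaveOn
  have h := hconc.le_map_sum (t := Finset.univ) (w := fun _ : Fin d => (d:ℝ)⁻¹) (p := μ)
    (fun i _ => by positivity)
    (by simp [Finset.card_univ, mul_inv_cancel₀ hd'.ne'])
    (fun i _ => hμ i)
  simp only [smul_eq_mul, ← Finset.mul_sum] at h
  calc ∑ i, Real.log (μ i) = d * ((d:ℝ)⁻¹ * ∑ i, Real.log (μ i)) := by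
        field_simp
    _ ≤ d * Real.log ((d:ℝ)⁻¹ * ∑ i, μ i) := by
        apply mul_le_mul_of_nonneg_left h hd'.le
    _ = d * Real.log ((∑ i, μ i) / d) := by rw [inv_mul_eq_div]

/-- trace of a hermitian matrix equals the sum of eigenvalues (real case). -/
lemma trace_eq_sum_eigenvalues {d : ℕ} {M : Matrix (Fin d) (Fin d) ℝ}
    (hM : M.IsHermitian) : M.trace = ∑ i, hM.eigenvalues i := by
  simpa using hM.trace_eq_sum_eigenvalues

/-- log-det is at most `d * log (trace / d)` for positive definite matrices. -/
lemma log_det_le {d : ℕ} (hd : 0 < d) {M : Matrix (Fin d) (Fin d) ℝ} (hM : M.PosDef) :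
    Real.log M.det ≤ d * Real.log (M.trace / d) := by
  have hH := hM.isHermitian
  have hpos : ∀ i, 0 < hH.eigenvalues i := hM.eigenvalues_pos
  have hdet : M.det = ∏ i, hH.eigenvalues i := by
    simpa using hH.det_eq_prod_eigenvalues
  rw [hdet, Real.log_prod (fun i _ => (hpos i).ne'), trace_eq_sum_eigenvalues hH]
  exact sum_log_le_card_mul_log hd _ hpos

lemma posSemidef_vecMulVec' {d : ℕ} (u : Fin d → ℝ) :
    (Matrix.vecMulVec u u).PosSemidef := by
  simpa using Matrix.posSemidef_vecMulVec_self_star u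

lemma PosDef.add_posSemidef' {d : ℕ} {A B : Matrix (Fin d) (Fin d) ℝ}
    (hA : A.PosDef) (hB : B.PosSemidef) : (A + B).PosDef := by
  exact hA.add_posSemidef hB

theorem elliptical_potential_log (d T : ℕ) (hd : 0 < d) (L lam : ℝ) (hlam : 0 < lam)
    (φ : ℕ → Fin d → ℝ) (hφ : ∀ t, φ t ⬝ᵥ φ t ≤ L ^ 2)
    (V : ℕ → Matrix (Fin d) (Fin d) ℝ)
    (hV0 : V 0 = lam • (1 : Matrix (Fin d) (Fin d) ℝ))
    (hVrec : ∀ t < T, V (t + 1) = V t + Matrix.vecMulVec (φ (t + 1)) (φ (t + 1))) :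
    ∑ t ∈ Finset.range T, Real.log (1 + φ (t + 1) ⬝ᵥ ((V t)⁻¹ *ᵥ φ (t + 1))) ≤
      d * Real.log (lam + T * L ^ 2 / d) - d * Real.log lam := by
  have hd' : (0:ℝ) < d := by exact_mod_cast hd
  have dp_nonneg : ∀ u : Fin d → ℝ, 0 ≤ u ⬝ᵥ u :=
    fun u => Finset.sum_nonneg fun i _ => mul_self_nonneg (u i)
  -- positive definiteness
  have hPD : ∀ t, t ≤ T → (V t).PosDef := by
    intro t
    induction t with
    | zero =>
      intro _
      rw [hV0]
      have : lam • (1 : Matrix (Fin d) (Fin d) ℝ) =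
          Matrix.diagonal (fun _ => lam) := by
        ext i j
        by_cases h : i = j <;> simp [h, Matrix.one_apply, Matrix.diagonal_apply]
      rw [this]
      exact Matrix.PosDef.diagonal (fun _ => hlam)
    | succ t ih =>
      intro ht
      rw [hVrec t (by omega)]
      exact PosDef.add_posSemidef' (ih (by omega)) (posSemidef_vecMulVec' _)
  -- set q
  set q : ℕ → ℝ := fun t => φ (t + 1) ⬝ᵥ ((V t)⁻¹ *ᵥ φ (t + 1)) with hq
  have hqnonneg : ∀ t, t ≤ T → 0 ≤ q t := by
    intro t ht
    have := ((hPD t ht).inv).posSemidef.dotProduct_mulVec_nonneg (φ (t + 1))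
    simpa [hq] using this
  -- determinant recursion
  have hdetrec : ∀ t < T, (V (t + 1)).det = (V t).det * (1 + q t) := by
    intro t ht
    have hU : IsUnit (V t).det := (hPD t (by omega)).isUnit.map Matrix.detMonoidHom
    rw [hVrec t ht, Matrix.vecMulVec_eq Unit,
      Matrix.det_add_replicateCol_mul_replicateRow hU]
    congr 1
    simp only [hq]
    rw [Matrix.det_unique, Matrix.dotProduct_mulVec]
    simp [Matrix.mul_apply, Matrix.row, Matrix.col, dotProduct, Matrix.vecMul,
      Matrix.one_apply, Finset.mul_sum, Finset.sum_mul, mul_comm, mul_assoc, mul_left_comm]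
  -- telescoping
  have htel : ∀ n, n ≤ T →
      Real.log ((V n).det) =
        Real.log ((V 0).det) + ∑ t ∈ Finset.range n, Real.log (1 + q t) := by
    intro n
    induction n with
    | zero => simp
    | succ n ih =>
      intro hn
      have h1q : 0 < 1 + q n := by linarith [hqnonneg n (by omega)]
      rw [hdetrec n (by omega), Real.log_mul (hPD n (by omega)).det_pos.ne' h1q.ne',
        Finset.sum_range_succ, ih (by omega)]
      ring
  -- det V 0
  have hdet0 : Real.log ((V 0).det) = d * Real.log lam := by
    rw [hV0, Matrix.det_smul, Matrix.det_one, mul_one]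
    simp [Real.log_pow]
  -- trace bound
  have hL2 : (0:ℝ) ≤ L ^ 2 := le_trans (dp_nonneg (φ 0)) (hφ 0)
  have htr : ∀ n, n ≤ T → (V n).trace = d * lam + ∑ t ∈ Finset.range n, φ (t+1) ⬝ᵥ φ (t+1) := by
    intro n
    induction n with
    | zero =>
      intro _
      simp [hV0, Matrix.trace_smul, Matrix.trace_one, mul_comm]
    | succ n ih =>
      intro hn
      rw [hVrec n (by omega), Matrix.trace_add, ih (by omega), Finset.sum_range_succ,
        Matrix.vecMulVec_eq Unit, Matrix.trace_replicateCol_mul_replicateRow]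
      ring
  have htrace_le : (V T).trace ≤ d * lam + T * L ^ 2 := by
    rw [htr T le_rfl]
    have : ∑ t ∈ Finset.range T, φ (t+1) ⬝ᵥ φ (t+1) ≤ ∑ _t ∈ Finset.range T, L ^ 2 :=
      Finset.sum_le_sum (fun t _ => hφ (t+1))
    simp only [Finset.sum_const, Finset.card_range, nsmul_eq_mul] at this
    linarith
  -- combine
  have hmain : Real.log ((V T).det) ≤ d * Real.log (lam + T * L ^ 2 / d) := by
    calc Real.log ((V T).det) ≤ d * Real.log ((V T).trace / d) :=
          log_det_le hd (hPD T le_rfl)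
      _ ≤ d * Real.log (lam + T * L ^ 2 / d) := by
          apply mul_le_mul_of_nonneg_left _ hd'.le
          apply Real.log_le_log
          · apply div_pos _ hd'
            calc (0:ℝ) < d * lam := by positivity
              _ ≤ (V T).trace := by
                  rw [htr T le_rfl]
                  have : (0:ℝ) ≤ ∑ t ∈ Finset.range T, φ (t+1) ⬝ᵥ φ (t+1) :=
                    Finset.sum_nonneg (fun t _ => dp_nonneg _)
                  linarith
          · rw [div_le_iff₀ hd']
            calc (V T).trace ≤ d * lam + T * L ^ 2 := htrace_le
              _ = (lam + T * L ^ 2 / d) * d := by field_simp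
  have := htel T le_rfl
  rw [hdet0] at this
  have hsum : ∑ t ∈ Finset.range T, Real.log (1 + q t) =
      Real.log ((V T).det) - d * Real.log lam := by linarith
  rw [show (∑ t ∈ Finset.range T, Real.log (1 + φ (t + 1) ⬝ᵥ ((V t)⁻¹ *ᵥ φ (t + 1)))) =
      ∑ t ∈ Finset.range T, Real.log (1 + q t) from rfl, hsum]
  linarith
end

section
/- Let λ > 0 and φ₁,…,φ_T ∈ ℝ^d with ‖φ_t‖₂² ≤ L². Define V₀ = λI and V_t = V_{t-1} + φ_t φ_tᵀ. Then ∑_{t=1}^T min{φ_tᵀ V_{t-1}⁻¹ φ_t, 1} ≤ 2d·log(λ + T L²/d) - 2d·log λ. -/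
open Finset Matrix

lemma min_le_two_log_aux (w : ℝ) (hw : 0 ≤ w) : min w 1 ≤ 2 * Real.log (1 + w) := by
  have h1 : (0:ℝ) < 1 + w := by linarith
  have h2 : Real.log (1 + w)⁻¹ ≤ (1 + w)⁻¹ - 1 :=
    Real.log_le_sub_one_of_pos (by positivity)
  rw [Real.log_inv] at h2
  have h3 : 1 - (1 + w)⁻¹ ≤ Real.log (1 + w) := by linarith
  have h4 : min w 1 ≤ 2 * w / (1 + w) := by
    rw [le_div_iff₀ h1]
    rcases le_total w 1 with h | h
    · rw [min_eq_left h]; nlinarith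
    · rw [min_eq_right h]; nlinarith
  have h5 : 2 * w / (1 + w) = 2 * (1 - (1 + w)⁻¹) := by
    field_simp
    ring
  calc min w 1 ≤ 2 * w / (1 + w) := h4
    _ = 2 * (1 - (1 + w)⁻¹) := h5
    _ ≤ 2 * Real.log (1 + w) := by linarith

lemma row_mul_mul_col_entry {d : ℕ} (v u : Fin d → ℝ) (B : Matrix (Fin d) (Fin d) ℝ) :
    (replicateRow Unit v * B * replicateCol Unit u) (default : Unit) (default : Unit) = v ⬝ᵥ (B *ᵥ u) := by
  rw [← replicateRow_vecMul, replicateRow_mul_replicateCol_apply, dotProduct_mulVec]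

lemma trace_pos_of_posDef {d : ℕ} (hd : 0 < d) (M : Matrix (Fin d) (Fin d) ℝ)
    (hM : M.PosDef) : 0 < M.trace := by
  have h : ∀ i, 0 < M i i := by
    intro i
    have hne : (Pi.single i 1 : Fin d → ℝ) ≠ 0 := by
      intro hcon
      have := congrFun hcon i
      simp at this
    have := hM.dotProduct_mulVec_pos hne
    simpa [star_trivial, dotProduct, Pi.single_apply, mulVec_single] using this
  have : Nonempty (Fin d) := ⟨⟨0, hd⟩⟩
  exact Finset.sum_pos (fun i _ => h i) Finset.univ_nonempty

lemma amgm_det_le {d : ℕ} (hd : 0 < d) (M : Matrix (Fin d) (Fin d) ℝ) (hM : M.PosDef) :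
    M.det ≤ (M.trace / d) ^ d := by
  classical
  set μ := hM.isHermitian.eigenvalues with hμdef
  have hμ : ∀ i, 0 ≤ μ i := fun i => (hM.eigenvalues_pos i).le
  have hdet : M.det = ∏ i, μ i := by
    simpa using hM.isHermitian.det_eq_prod_eigenvalues
  have htr : M.trace = ∑ i, μ i := by
    rw [hM.isHermitian.trace_eq_sum_eigenvalues]
    simp [hμdef]
  have hdpos : (0:ℝ) < d := by exact_mod_cast hd
  have key := Real.geom_mean_le_arith_mean (univ : Finset (Fin d)) (fun _ => (1:ℝ)) μ
    (fun _ _ => zero_le_one) (by simpa using hdpos) (fun i _ => hμ i)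
  simp only [Real.rpow_one, one_mul, Finset.sum_const, Finset.card_univ, Fintype.card_fin,
    nsmul_eq_mul, mul_one] at key
  have hprod : (0:ℝ) ≤ ∏ i, μ i := Finset.prod_nonneg fun i _ => hμ i
  have h1 : (∏ i, μ i) = ((∏ i, μ i) ^ ((d:ℝ)⁻¹)) ^ d :=
    (Real.rpow_inv_natCast_pow hprod hd.ne').symm
  rw [hdet, htr, h1]
  exact pow_le_pow_left₀ (Real.rpow_nonneg hprod _) key d

theorem elliptical_potential_min (d T : ℕ) (hd : 0 < d) (L lam : ℝ) (hlam : 0 < lam)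
    (φ : ℕ → Fin d → ℝ) (hφ : ∀ t, φ t ⬝ᵥ φ t ≤ L ^ 2)
    (V : ℕ → Matrix (Fin d) (Fin d) ℝ)
    (hV0 : V 0 = lam • (1 : Matrix (Fin d) (Fin d) ℝ))
    (hVrec : ∀ t < T, V (t + 1) = V t + Matrix.vecMulVec (φ (t + 1)) (φ (t + 1))) :
    ∑ t ∈ Finset.range T, min (φ (t + 1) ⬝ᵥ ((V t)⁻¹ *ᵥ φ (t + 1))) 1 ≤
      2 * d * Real.log (lam + T * L ^ 2 / d) - 2 * d * Real.log lam := by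
  classical
  set w : ℕ → ℝ := fun t => φ (t + 1) ⬝ᵥ ((V t)⁻¹ *ᵥ φ (t + 1)) with hwdef
  have hdpos : (0:ℝ) < d := by exact_mod_cast hd
  -- L^2 ≥ 0
  have hL2 : (0:ℝ) ≤ L ^ 2 := by
    refine le_trans ?_ (hφ 0)
    exact Finset.sum_nonneg fun i _ => mul_self_nonneg _
  -- vecMulVec x x is PSD
  have hvv : ∀ x : Fin d → ℝ, (vecMulVec x x).PosSemidef := by
    intro x
    have h : vecMulVec x x = replicateCol Unit x * (replicateCol Unit x)ᴴ := by
      rw [conjTranspose_replicateCol, star_trivial, vecMulVec_eq Unit]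
    rw [h]
    exact posSemidef_self_mul_conjTranspose _
  -- each V t is positive definite
  have hpos : ∀ t, t ≤ T → (V t).PosDef := by
    intro t
    induction t with
    | zero =>
      intro _
      rw [hV0, smul_one_eq_diagonal]
      exact PosDef.diagonal fun _ => hlam
    | succ s ih =>
      intro hs
      rw [hVrec s (by omega)]
      exact (ih (by omega)).add_posSemidef (hvv _)
  -- w t ≥ 0
  have hw_nonneg : ∀ t, t < T → 0 ≤ w t := by
    intro t ht
    have h := ((hpos t ht.le).inv).posSemidef.dotProduct_mulVec_nonneg (φ (t + 1))
    rwa [star_trivial] at h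
  -- matrix determinant lemma step
  have hdet : ∀ t, t < T → (V (t + 1)).det = (V t).det * (1 + w t) := by
    intro t ht
    have hU : IsUnit (V t).det := (hpos t ht.le).det_pos.ne'.isUnit
    rw [hVrec t ht, vecMulVec_eq Unit, det_add_replicateCol_mul_replicateRow hU]
    congr 1
    rw [det_unique, Matrix.add_apply, Matrix.one_apply_eq, row_mul_mul_col_entry]
  -- telescoping log-determinant
  have hlogdet0 : Real.log (V 0).det = d * Real.log lam := by
    rw [hV0, det_smul, det_one, mul_one, Fintype.card_fin, Real.log_pow]
  have hlog : ∀ t, t ≤ T →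
      Real.log (V t).det = d * Real.log lam + ∑ s ∈ range t, Real.log (1 + w s) := by
    intro t
    induction t with
    | zero => intro _; simpa using hlogdet0
    | succ s ih =>
      intro hs
      have hws := hw_nonneg s (by omega)
      rw [sum_range_succ, hdet s (by omega),
        Real.log_mul (hpos s (by omega)).det_pos.ne' (by linarith), ih (by omega)]
      ring
  -- trace bound
  have htrace : ∀ t, t ≤ T → (V t).trace ≤ d * lam + t * L ^ 2 := by
    intro t
    induction t with
    | zero =>
      intro _
      rw [hV0, trace_smul, trace_one, Fintype.card_fin]
      simp [mul_comm]
    | succ s ih =>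
      intro hs
      rw [hVrec s (by omega), trace_add, vecMulVec_eq Unit, trace_replicateCol_mul_replicateRow]
      have h1 := hφ (s + 1)
      have h2 := ih (by omega)
      push_cast
      linarith
  -- determinant bound
  have hdetT : Real.log (V T).det ≤ d * Real.log (lam + T * L ^ 2 / d) := by
    have hposT := hpos T le_rfl
    have htr : (V T).trace / d ≤ lam + T * L ^ 2 / d := by
      rw [div_le_iff₀ hdpos]
      have := htrace T le_rfl
      field_simp
      linarith
    have hb : (0:ℝ) < lam + T * L ^ 2 / d := by positivity
    have h1 : (V T).det ≤ (lam + T * L ^ 2 / d) ^ d := by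
      refine le_trans (amgm_det_le hd (V T) hposT) ?_
      refine pow_le_pow_left₀ ?_ htr d
      have : (0:ℝ) < (V T).trace := trace_pos_of_posDef hd _ hposT
      positivity
    calc Real.log (V T).det ≤ Real.log ((lam + T * L ^ 2 / d) ^ d) :=
          Real.log_le_log hposT.det_pos h1
      _ = d * Real.log (lam + T * L ^ 2 / d) := by rw [Real.log_pow]
  -- put everything together
  have hsum : ∑ t ∈ range T, Real.log (1 + w t) =
      Real.log (V T).det - d * Real.log lam := by
    rw [hlog T le_rfl]; ring
  calc ∑ t ∈ range T, min (w t) 1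
      ≤ ∑ t ∈ range T, 2 * Real.log (1 + w t) :=
        Finset.sum_le_sum fun t ht => min_le_two_log_aux _ (hw_nonneg t (mem_range.mp ht))
    _ = 2 * (Real.log (V T).det - d * Real.log lam) := by
        rw [← Finset.mul_sum, hsum]
    _ ≤ 2 * (d * Real.log (lam + T * L ^ 2 / d) - d * Real.log lam) := by linarith
    _ = 2 * d * Real.log (lam + T * L ^ 2 / d) - 2 * d * Real.log lam := by ring
end
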